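/- Let A be a ring and B a commutative ring. Let f, g : A → B be two central ℤ-linear maps, let p ∈ ℕ, let a_1, …, a_p ∈ A, and let U and V be disjoint subsets of [p] with U ∪ V = [p]. Then Σ_σ sgn(σ) · Π_c t_c = f_U(a) · g_V(a), where the sum ranges over all permutations σ ∈ S_p with σ(U) ⊆ U and σ(V) ⊆ V, the product runs over all cycles c = (i_1, i_2, …, i_k) of σ, and t_c equals f(a_{i_1} a_{i_2} ⋯ a_{i_k}) if all elements of c belong to U, and equals g(a_{i_1} a_{i_2} ⋯ a_{i_k}) if all elements of c belong to V (every cycle of such σ lies entirely in U or entirely in V). -/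

import Mathlib

open scoped Classical

noncomputable section

/-- A `ℤ`-linear map `f : A → B` is *central* if `f (a * a') = f (a' * a)` for all `a, a'`. -/
def Central {A B : Type*} [Ring A] [CommRing B] (f : A →ₗ[ℤ] B) : Prop :=
  ∀ a a' : A, f (a * a') = f (a' * a)

/-- The product `a x * a (σ x) * a (σ² x) * ⋯` along the cycle of the permutation `σ`
containing `x`, starting at `x` (the cycle has length `Function.minimalPeriod σ x`). -/
def cycleProdAt {ι A : Type*} [Ring A] (a : ι → A) (σ : Equiv.Perm ι) (x : ι) : A :=
  ((List.range (Function.minimalPeriod (⇑σ) x)).map (fun j => a ((σ ^ j) x))).prod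

/-- The Frobenius map of a central `ℤ`-linear map `f : A → B`, applied to a finite family
`a : ι → A`:  `∑_{σ} sgn σ • ∏_{cycles c of σ} f (a_{i₁} a_{i₂} ⋯ a_{i_k})`, where each cycle
is represented by the product along it starting from its distinguished element (the one
minimizing a fixed enumeration of `ι`); when `f` is central this agrees with the classical
definition, which is independent of the starting points. -/
def frob {ι A B : Type*} [Fintype ι] [DecidableEq ι] [Ring A] [CommRing B]
    (f : A →ₗ[ℤ] B) (a : ι → A) : B :=
  ∑ σ : Equiv.Perm ι, (Equiv.Perm.sign σ : ℤ) •
    ∏ x : ι,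
      if ∀ j : ℕ, (Fintype.equivFin ι) x ≤ (Fintype.equivFin ι) ((σ ^ j) x)
      then f (cycleProdAt a σ x) else 1

/-- `f` is an `n`-homomorphism if it is central and its `(n+1)`-Frobenius map vanishes. -/
def IsNHom {A B : Type*} [Ring A] [CommRing B] (n : ℕ) (f : A →ₗ[ℤ] B) : Prop :=
  Central f ∧ ∀ a : Fin (n + 1) → A, frob f a = 0

/-- `π` is a set partition of the finite set `J`: its blocks are nonempty, pairwise
disjoint, and their union is `J`. -/
def IsSetPartition {α : Type*} [DecidableEq α] (J : Finset α) (π : Finset (Finset α)) : Prop :=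
  (∀ P ∈ π, P.Nonempty) ∧
  (∀ P ∈ π, ∀ Q ∈ π, P ≠ Q → Disjoint P Q) ∧
  π.biUnion id = J

/-- Delete the element `n` from the block of `π` containing it (removing the block if it
becomes empty). -/
def delPart (n : ℕ) (π : Finset (Finset ℕ)) : Finset (Finset ℕ) :=
  (π.image (fun P => P.erase n)).erase ∅

set_option linter.unusedSectionVars false

section Aux

variable {ι A B : Type*} [Fintype ι] [DecidableEq ι] [Ring A] [CommRing B]

lemma perm_mem_periodicPts (σ : Equiv.Perm ι) (x : ι) :
    x ∈ Function.periodicPts ⇑σ := by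
  refine ⟨orderOf σ, orderOf_pos σ, ?_⟩
  show (⇑σ)^[orderOf σ] x = x
  rw [Equiv.Perm.iterate_eq_pow, pow_orderOf_eq_one]
  rfl

lemma pow_minimalPeriod_apply (σ : Equiv.Perm ι) (x : ι) :
    (σ ^ Function.minimalPeriod ⇑σ x) x = x := by
  have h := Function.iterate_minimalPeriod (f := ⇑σ) (x := x)
  rwa [Equiv.Perm.iterate_eq_pow] at h

lemma minimalPeriod_perm_apply (σ : Equiv.Perm ι) (x : ι) :
    Function.minimalPeriod ⇑σ (σ x) = Function.minimalPeriod ⇑σ x :=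
  Function.minimalPeriod_apply (perm_mem_periodicPts σ x)

lemma cycleProdAt_apply_eq (f : A →ₗ[ℤ] B) (hf : Central f) (a : ι → A)
    (σ : Equiv.Perm ι) (x : ι) :
    f (cycleProdAt a σ (σ x)) = f (cycleProdAt a σ x) := by
  obtain ⟨n, hn⟩ : ∃ n, Function.minimalPeriod ⇑σ x = n + 1 :=
    Nat.exists_eq_succ_of_ne_zero
      (Function.minimalPeriod_pos_of_mem_periodicPts (perm_mem_periodicPts σ x)).ne'
  have hx : (σ ^ (n + 1)) x = x := by
    rw [← hn]; exact pow_minimalPeriod_apply σ x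
  set T : A := ((List.range n).map (fun j => a ((σ ^ (j + 1)) x))).prod with hT
  have hL : cycleProdAt a σ (σ x) = T * a x := by
    unfold cycleProdAt
    rw [minimalPeriod_perm_apply, hn]
    have hfun : (fun j => a ((σ ^ j) (σ x))) = fun j => a ((σ ^ (j + 1)) x) := by
      funext j
      rw [pow_succ, Equiv.Perm.mul_apply]
    rw [hfun, List.range_succ, List.map_append, List.prod_append]
    simp [hx, hT]
  have hR : cycleProdAt a σ x = a x * T := by
    unfold cycleProdAt
    rw [hn, List.range_succ_eq_map, List.map_cons, List.prod_cons, List.map_map]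
    simp only [pow_zero, Equiv.Perm.one_apply]
    rfl
  rw [hL, hR]
  exact (hf (a x) T).symm

end Aux

section Aux2

set_option linter.unusedSectionVars false

variable {ι A B : Type*} [Fintype ι] [DecidableEq ι] [Ring A] [CommRing B]

lemma sameCycle_pow (σ : Equiv.Perm ι) (x : ι) (j : ℕ) : σ.SameCycle x ((σ ^ j) x) :=
  ⟨(j : ℤ), by rw [zpow_natCast]⟩

lemma cycleProdAt_sameCycle (f : A →ₗ[ℤ] B) (hf : Central f) (a : ι → A)
    (σ : Equiv.Perm ι) {x y : ι} (h : σ.SameCycle x y) :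
    f (cycleProdAt a σ y) = f (cycleProdAt a σ x) := by
  obtain ⟨i, -, rfl⟩ := h.exists_pow_eq'
  induction i with
  | zero => simp
  | succ k ih =>
    rw [pow_succ', Equiv.Perm.mul_apply, cycleProdAt_apply_eq f hf]
    exact ih (sameCycle_pow σ x k)

/-- `x` is minimal in its `σ`-cycle with respect to the ranking `r`. -/
def PermMinCond {κ : Type*} [LinearOrder κ] (r : ι → κ) (σ : Equiv.Perm ι) (x : ι) : Prop :=
  ∀ j : ℕ, r x ≤ r ((σ ^ j) x)

lemma sameCycle_exists_nat (σ : Equiv.Perm ι) {x y : ι} (h : σ.SameCycle x y) :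
    ∃ j : ℕ, (σ ^ j) x = y := by
  obtain ⟨i, -, hi⟩ := h.exists_pow_eq'
  exact ⟨i, hi⟩

variable {κ : Type*} [LinearOrder κ]

/-- The `r`-minimal element of the `σ`-cycle of `x`. -/
noncomputable def permPick (r : ι → κ) (σ : Equiv.Perm ι) (x : ι) : ι :=
  Classical.choose (Finset.exists_min_image (Finset.univ.filter fun y => σ.SameCycle x y) r
    ⟨x, Finset.mem_filter.mpr ⟨Finset.mem_univ x, Equiv.Perm.SameCycle.refl σ x⟩⟩)

lemma permPick_spec (r : ι → κ) (σ : Equiv.Perm ι) (x : ι) :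
    σ.SameCycle x (permPick r σ x) ∧
      ∀ y, σ.SameCycle x y → r (permPick r σ x) ≤ r y := by
  have h := Classical.choose_spec
    (Finset.exists_min_image (Finset.univ.filter fun y => σ.SameCycle x y) r
      ⟨x, Finset.mem_filter.mpr ⟨Finset.mem_univ x, Equiv.Perm.SameCycle.refl σ x⟩⟩)
  refine ⟨(Finset.mem_filter.mp h.1).2, fun y hy => h.2 y ?_⟩
  exact Finset.mem_filter.mpr ⟨Finset.mem_univ y, hy⟩

lemma permPick_minCond (r : ι → κ) (σ : Equiv.Perm ι) (x : ι) :
    PermMinCond r σ (permPick r σ x) := by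
  intro j
  exact (permPick_spec r σ x).2 _ ((permPick_spec r σ x).1.trans (sameCycle_pow σ _ j))

lemma permPick_eq (r : ι → κ) (hr : Function.Injective r) (σ : Equiv.Perm ι) {x z : ι}
    (hz : σ.SameCycle x z) (hmz : PermMinCond r σ z) : permPick r σ x = z := by
  have h1 : r (permPick r σ x) ≤ r z := (permPick_spec r σ x).2 z hz
  have h2 : r z ≤ r (permPick r σ x) := by
    obtain ⟨j, hj⟩ := sameCycle_exists_nat σ (hz.symm.trans (permPick_spec r σ x).1)
    rw [← hj]
    exact hmz j
  exact hr (le_antisymm h1 h2)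

lemma prod_minCond_eq {κ' : Type*} [LinearOrder κ'] {r : ι → κ} {r' : ι → κ'}
    (hr : Function.Injective r) (hr' : Function.Injective r') (σ : Equiv.Perm ι) (F : ι → B)
    (hF : ∀ x, F (σ x) = F x) :
    (∏ x, if PermMinCond r σ x then F x else 1)
      = ∏ x, if PermMinCond r' σ x then F x else 1 := by
  have hFc : ∀ {x y : ι}, σ.SameCycle x y → F y = F x := by
    intro x y h
    obtain ⟨i, -, rfl⟩ := h.exists_pow_eq'
    induction i with
    | zero => simp
    | succ k ih =>
      rw [pow_succ', Equiv.Perm.mul_apply, hF]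
      exact ih (sameCycle_pow σ x k)
  rw [← Finset.prod_filter, ← Finset.prod_filter]
  refine Finset.prod_bij' (fun x _ => permPick r' σ x) (fun y _ => permPick r σ y)
    (fun x hx => ?_) (fun y hy => ?_) (fun x hx => ?_) (fun y hy => ?_) (fun x hx => ?_)
  · exact Finset.mem_filter.mpr ⟨Finset.mem_univ _, permPick_minCond r' σ x⟩
  · exact Finset.mem_filter.mpr ⟨Finset.mem_univ _, permPick_minCond r σ y⟩
  · exact permPick_eq r hr σ (permPick_spec r' σ x).1.symm (Finset.mem_filter.mp hx).2
  · exact permPick_eq r' hr' σ (permPick_spec r σ y).1.symm (Finset.mem_filter.mp hy).2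
  · exact (hFc (permPick_spec r' σ x).1).symm

lemma subtypePerm_pow_apply {pr : ι → Prop} (σ : Equiv.Perm ι)
    (h : ∀ x, pr (σ x) ↔ pr x) (j : ℕ) (x : {x // pr x}) :
    (((σ.subtypePerm h ^ j) x : ι)) = (σ ^ j) (x : ι) := by
  rw [Equiv.Perm.subtypePerm_pow]
  rfl

lemma minimalPeriod_subtypePerm {pr : ι → Prop} (σ : Equiv.Perm ι)
    (h : ∀ x, pr (σ x) ↔ pr x) (x : {x // pr x}) :
    Function.minimalPeriod ⇑(σ.subtypePerm h) x = Function.minimalPeriod ⇑σ (x : ι) := by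
  rw [Function.minimalPeriod_eq_minimalPeriod_iff]
  intro n
  simp only [Function.IsPeriodicPt, Function.IsFixedPt, Equiv.Perm.iterate_eq_pow]
  constructor
  · intro hh
    rw [← subtypePerm_pow_apply σ h n x, hh]
  · intro hh
    exact Subtype.ext (by rw [subtypePerm_pow_apply]; exact hh)

lemma cycleProdAt_subtypePerm {pr : ι → Prop} (a : ι → A) (σ : Equiv.Perm ι)
    (h : ∀ x, pr (σ x) ↔ pr x) (x : {x // pr x}) :
    cycleProdAt (fun y : {x // pr x} => a y.1) (σ.subtypePerm h) x = cycleProdAt a σ (x : ι) := by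
  unfold cycleProdAt
  rw [minimalPeriod_subtypePerm]
  refine congrArg List.prod (List.map_congr_left fun j _ => ?_)
  show a (((σ.subtypePerm h ^ j) x : ι)) = _
  rw [subtypePerm_pow_apply]

end Aux2

lemma perm_sign_fintype_congr {γ : Type*} [DecidableEq γ] (i1 i2 : Fintype γ)
    (π : Equiv.Perm γ) :
    ((@Equiv.Perm.sign γ _ i1) π : ℤ) = ((@Equiv.Perm.sign γ _ i2) π : ℤ) := by
  cases Subsingleton.elim i1 i2
  rfl

/-- For a decomposition `[p] = U ⊔ V`, the sum over permutations preserving both `U` and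
`V`, with each cycle weighted by `f` (if it lies in `U`) or `g` (if it lies in `V`),
equals `f_U(a) · g_V(a)`. -/
theorem stmt10 {A B : Type*} [Ring A] [CommRing B] (f g : A →ₗ[ℤ] B)
    (hf : Central f) (hg : Central g) (p : ℕ) (a : Fin p → A)
    (U V : Finset (Fin p)) (hUV : Disjoint U V) (hunion : U ∪ V = Finset.univ) :
    (∑ σ ∈ Finset.univ.filter
        (fun σ : Equiv.Perm (Fin p) => (∀ x ∈ U, σ x ∈ U) ∧ (∀ x ∈ V, σ x ∈ V)),
      (Equiv.Perm.sign σ : ℤ) •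
        ∏ x : Fin p,
          if ∀ j : ℕ, (Fintype.equivFin (Fin p)) x ≤ (Fintype.equivFin (Fin p)) ((σ ^ j) x)
          then (if x ∈ U then f (cycleProdAt a σ x) else g (cycleProdAt a σ x))
          else 1)
      = frob f (fun x : {x // x ∈ U} => a x.1) *
          frob g (fun x : {x // x ∈ V} => a x.1) := by
  have hVU : ∀ x : Fin p, x ∈ V ↔ ¬ x ∈ U := by
    intro x
    constructor
    · intro hv hu
      exact Finset.disjoint_left.mp hUV hu hv
    · intro hu
      have hx : x ∈ U ∪ V := by rw [hunion]; exact Finset.mem_univ x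
      rcases Finset.mem_union.mp hx with h | h
      · exact absurd h hu
      · exact h
  have hiffU : ∀ σ : Equiv.Perm (Fin p),
      ((∀ x ∈ U, σ x ∈ U) ∧ (∀ x ∈ V, σ x ∈ V)) →
      ∀ x : Fin p, σ x ∈ U ↔ x ∈ U := by
    intro σ hσ x
    refine ⟨fun h => ?_, hσ.1 x⟩
    by_contra hx
    exact (hVU (σ x)).mp (hσ.2 x ((hVU x).mpr hx)) h
  have hiffV : ∀ σ : Equiv.Perm (Fin p),
      ((∀ x ∈ U, σ x ∈ U) ∧ (∀ x ∈ V, σ x ∈ V)) →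
      ∀ x : Fin p, σ x ∈ V ↔ x ∈ V := by
    intro σ hσ x
    rw [hVU, hVU, not_iff_not]
    exact hiffU σ hσ x
  have hrecomb : ∀ (σ : Equiv.Perm (Fin p))
      (hσ' : (∀ x ∈ U, σ x ∈ U) ∧ (∀ x ∈ V, σ x ∈ V)),
      Equiv.Perm.subtypeCongr (σ.subtypePerm (hiffU σ hσ'))
        ((Equiv.subtypeEquivRight hVU).permCongr (σ.subtypePerm (hiffV σ hσ'))) = σ := by
    intro σ hσ'
    ext x
    by_cases hx : x ∈ U
    · rw [Equiv.Perm.subtypeCongr.left_apply _ _ hx]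
      rfl
    · rw [Equiv.Perm.subtypeCongr.right_apply _ _ hx]
      simp [Equiv.subtypeEquivRight]
      rfl
  have key : (∑ σ ∈ Finset.univ.filter
        (fun σ : Equiv.Perm (Fin p) => (∀ x ∈ U, σ x ∈ U) ∧ (∀ x ∈ V, σ x ∈ V)),
      (Equiv.Perm.sign σ : ℤ) •
        ∏ x : Fin p,
          if ∀ j : ℕ, (Fintype.equivFin (Fin p)) x ≤ (Fintype.equivFin (Fin p)) ((σ ^ j) x)
          then (if x ∈ U then f (cycleProdAt a σ x) else g (cycleProdAt a σ x))
          else 1)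
      = ∑ τρ : Equiv.Perm {x // x ∈ U} × Equiv.Perm {x // x ∈ V},
        ((Equiv.Perm.sign τρ.1 : ℤ) • ∏ x : {x // x ∈ U},
          if ∀ j : ℕ, (Fintype.equivFin {x // x ∈ U}) x
              ≤ (Fintype.equivFin {x // x ∈ U}) ((τρ.1 ^ j) x)
          then f (cycleProdAt (fun y : {x // x ∈ U} => a y.1) τρ.1 x) else 1) *
        ((Equiv.Perm.sign τρ.2 : ℤ) • ∏ x : {x // x ∈ V},
          if ∀ j : ℕ, (Fintype.equivFin {x // x ∈ V}) x
              ≤ (Fintype.equivFin {x // x ∈ V}) ((τρ.2 ^ j) x)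
          then g (cycleProdAt (fun y : {x // x ∈ V} => a y.1) τρ.2 x) else 1) := by
    refine Finset.sum_bij'
      (fun σ hσ => (σ.subtypePerm (hiffU σ (Finset.mem_filter.mp hσ).2),
                    σ.subtypePerm (hiffV σ (Finset.mem_filter.mp hσ).2)))
      (fun τρ _ => Equiv.Perm.subtypeCongr τρ.1
        ((Equiv.subtypeEquivRight hVU).permCongr τρ.2))
      (fun σ hσ => Finset.mem_univ _)
      (fun τρ _ => ?_) (fun σ hσ => hrecomb σ (Finset.mem_filter.mp hσ).2)
      (fun τρ _ => ?_) (fun σ hσ => ?_)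
    · -- j maps into the filtered set
      refine Finset.mem_filter.mpr ⟨Finset.mem_univ _, ⟨fun x hx => ?_, fun x hx => ?_⟩⟩
      · rw [Equiv.Perm.subtypeCongr.left_apply _ _ hx]
        exact (τρ.1 ⟨x, hx⟩).2
      · rw [Equiv.Perm.subtypeCongr.right_apply _ _ ((hVU x).mp hx)]
        exact (hVU _).mpr (((Equiv.subtypeEquivRight hVU).permCongr τρ.2) ⟨x, (hVU x).mp hx⟩).2
    · -- right inverse
      refine Prod.ext ?_ ?_
      · ext z
        exact congrArg Fin.val (Equiv.Perm.subtypeCongr.left_apply τρ.1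
          ((Equiv.subtypeEquivRight hVU).permCongr τρ.2) z.2)
      · ext z
        exact congrArg Fin.val (Equiv.Perm.subtypeCongr.right_apply τρ.1
          ((Equiv.subtypeEquivRight hVU).permCongr τρ.2) ((hVU z.1).mp z.2))
    · -- summand equality
      have hσ2 := (Finset.mem_filter.mp hσ).2
      have hsign : (Equiv.Perm.sign σ : ℤ)
          = (Equiv.Perm.sign (σ.subtypePerm (hiffU σ hσ2)) : ℤ) * (Equiv.Perm.sign (σ.subtypePerm (hiffV σ hσ2)) : ℤ) := by
        conv_lhs => rw [← hrecomb σ hσ2]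
        rw [Equiv.Perm.sign_subtypeCongr, Equiv.Perm.sign_permCongr, Units.val_mul]
        exact congrArg₂ (· * ·) (perm_sign_fintype_congr _ _ _) (perm_sign_fintype_congr _ _ _)
      have hUpart : (∏ x ∈ U,
            if ∀ j : ℕ, (Fintype.equivFin (Fin p)) x ≤ (Fintype.equivFin (Fin p)) ((σ ^ j) x)
            then (if x ∈ U then f (cycleProdAt a σ x) else g (cycleProdAt a σ x))
            else 1)
          = ∏ x : {x // x ∈ U},
            if ∀ j : ℕ, (Fintype.equivFin {x // x ∈ U}) x
                ≤ (Fintype.equivFin {x // x ∈ U}) ((σ.subtypePerm (hiffU σ hσ2) ^ j) x)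
            then f (cycleProdAt (fun y : {x // x ∈ U} => a y.1) (σ.subtypePerm (hiffU σ hσ2)) x) else 1 := by
        rw [Finset.prod_subtype U (fun x => Iff.rfl)]
        have step1 : ∀ x : {x // x ∈ U},
            (if ∀ j : ℕ, (Fintype.equivFin (Fin p)) x.1
                ≤ (Fintype.equivFin (Fin p)) ((σ ^ j) x.1)
             then (if x.1 ∈ U then f (cycleProdAt a σ x.1) else g (cycleProdAt a σ x.1))
             else 1)
            = if PermMinCond (fun y : {x // x ∈ U} => (Fintype.equivFin (Fin p)) y.1) (σ.subtypePerm (hiffU σ hσ2)) x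
              then f (cycleProdAt (fun y : {x // x ∈ U} => a y.1) (σ.subtypePerm (hiffU σ hσ2)) x) else 1 := by
          intro x
          refine if_congr ?_ ?_ rfl
          · simp only [PermMinCond, subtypePerm_pow_apply]
          · rw [if_pos x.2, cycleProdAt_subtypePerm a σ (hiffU σ hσ2) x]
        rw [Finset.prod_congr rfl fun x _ => step1 x]
        exact prod_minCond_eq
          (fun y z hyz => Subtype.ext ((Fintype.equivFin (Fin p)).injective hyz))
          (Fintype.equivFin {x // x ∈ U}).injective (σ.subtypePerm (hiffU σ hσ2))
          (fun x => f (cycleProdAt (fun y : {x // x ∈ U} => a y.1) (σ.subtypePerm (hiffU σ hσ2)) x))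
          (fun x => cycleProdAt_apply_eq f hf _ (σ.subtypePerm (hiffU σ hσ2)) x)
      have hVpart : (∏ x ∈ V,
            if ∀ j : ℕ, (Fintype.equivFin (Fin p)) x ≤ (Fintype.equivFin (Fin p)) ((σ ^ j) x)
            then (if x ∈ U then f (cycleProdAt a σ x) else g (cycleProdAt a σ x))
            else 1)
          = ∏ x : {x // x ∈ V},
            if ∀ j : ℕ, (Fintype.equivFin {x // x ∈ V}) x
                ≤ (Fintype.equivFin {x // x ∈ V}) ((σ.subtypePerm (hiffV σ hσ2) ^ j) x)
            then g (cycleProdAt (fun y : {x // x ∈ V} => a y.1) (σ.subtypePerm (hiffV σ hσ2)) x) else 1 := by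
        rw [Finset.prod_subtype V (fun x => Iff.rfl)]
        have step1 : ∀ x : {x // x ∈ V},
            (if ∀ j : ℕ, (Fintype.equivFin (Fin p)) x.1
                ≤ (Fintype.equivFin (Fin p)) ((σ ^ j) x.1)
             then (if x.1 ∈ U then f (cycleProdAt a σ x.1) else g (cycleProdAt a σ x.1))
             else 1)
            = if PermMinCond (fun y : {x // x ∈ V} => (Fintype.equivFin (Fin p)) y.1) (σ.subtypePerm (hiffV σ hσ2)) x
              then g (cycleProdAt (fun y : {x // x ∈ V} => a y.1) (σ.subtypePerm (hiffV σ hσ2)) x) else 1 := by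
          intro x
          refine if_congr ?_ ?_ rfl
          · simp only [PermMinCond, subtypePerm_pow_apply]
          · rw [if_neg ((hVU x.1).mp x.2), cycleProdAt_subtypePerm a σ (hiffV σ hσ2) x]
        rw [Finset.prod_congr rfl fun x _ => step1 x]
        exact prod_minCond_eq
          (fun y z hyz => Subtype.ext ((Fintype.equivFin (Fin p)).injective hyz))
          (Fintype.equivFin {x // x ∈ V}).injective (σ.subtypePerm (hiffV σ hσ2))
          (fun x => g (cycleProdAt (fun y : {x // x ∈ V} => a y.1) (σ.subtypePerm (hiffV σ hσ2)) x))
          (fun x => cycleProdAt_apply_eq g hg _ (σ.subtypePerm (hiffV σ hσ2)) x)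
      have hsplit : (∏ x : Fin p,
            if ∀ j : ℕ, (Fintype.equivFin (Fin p)) x ≤ (Fintype.equivFin (Fin p)) ((σ ^ j) x)
            then (if x ∈ U then f (cycleProdAt a σ x) else g (cycleProdAt a σ x))
            else 1)
          = (∏ x ∈ U,
            if ∀ j : ℕ, (Fintype.equivFin (Fin p)) x ≤ (Fintype.equivFin (Fin p)) ((σ ^ j) x)
            then (if x ∈ U then f (cycleProdAt a σ x) else g (cycleProdAt a σ x))
            else 1) * (∏ x ∈ V,
            if ∀ j : ℕ, (Fintype.equivFin (Fin p)) x ≤ (Fintype.equivFin (Fin p)) ((σ ^ j) x)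
            then (if x ∈ U then f (cycleProdAt a σ x) else g (cycleProdAt a σ x))
            else 1) := by
        rw [show (Finset.univ : Finset (Fin p)) = U ∪ V from hunion.symm,
          Finset.prod_union hUV]
      have hsum : (Equiv.Perm.sign σ : ℤ) • (∏ x : Fin p,
            if ∀ j : ℕ, (Fintype.equivFin (Fin p)) x ≤ (Fintype.equivFin (Fin p)) ((σ ^ j) x)
            then (if x ∈ U then f (cycleProdAt a σ x) else g (cycleProdAt a σ x))
            else 1)
          = ((Equiv.Perm.sign (σ.subtypePerm (hiffU σ hσ2)) : ℤ) • ∏ x : {x // x ∈ U},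
              if ∀ j : ℕ, (Fintype.equivFin {x // x ∈ U}) x
                  ≤ (Fintype.equivFin {x // x ∈ U}) ((σ.subtypePerm (hiffU σ hσ2) ^ j) x)
              then f (cycleProdAt (fun y : {x // x ∈ U} => a y.1)
                (σ.subtypePerm (hiffU σ hσ2)) x) else 1) *
            ((Equiv.Perm.sign (σ.subtypePerm (hiffV σ hσ2)) : ℤ) • ∏ x : {x // x ∈ V},
              if ∀ j : ℕ, (Fintype.equivFin {x // x ∈ V}) x
                  ≤ (Fintype.equivFin {x // x ∈ V}) ((σ.subtypePerm (hiffV σ hσ2) ^ j) x)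
              then g (cycleProdAt (fun y : {x // x ∈ V} => a y.1)
                (σ.subtypePerm (hiffV σ hσ2)) x) else 1) := by
        rw [hsplit, hUpart, hVpart, hsign, zsmul_eq_mul, zsmul_eq_mul, zsmul_eq_mul]
        push_cast
        ring
      exact hsum
  rw [key, Fintype.sum_prod_type, frob, frob, Finset.sum_mul_sum]
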